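/- Fix p ∈ ℕ, p ≥ 1, h = 1/p. Every operator A in H^h (i.e., (A u)(x) = Σ_{j ∈ (ℤ/pℤ)^N} A_j(x) u(x + hj) with A_j step functions constant on cubes of side h) has operator norm on L²(𝕋^N → ℂ^M) equal to the operator norm of the matrix B_A ∈ ℂ^{Mp^N × Mp^N}. -/

import Mathlib

open MeasureTheory
open scoped ENNReal NNReal

noncomputable section

abbrev Torus (N : ℕ) := Fin N → AddCircle (1 : ℝ)

abbrev L2 (N M : ℕ) := Lp (EuclideanSpace ℂ (Fin M)) 2 (volume : Measure (Torus N))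

/-- The canonical representative in `[0,1)` of a point of `𝕋 = ℝ/ℤ`. -/
def lift1 (x : AddCircle (1 : ℝ)) : ℝ := (AddCircle.equivIco 1 0 x : ℝ)

/-- The index (in `(ℤ/pℤ)^N`) of the cube `∏_i [h p_i, h p_i + h)`, `h = 1/p`,
containing the point `x ∈ 𝕋^N`. -/
def cubeIdx (N p : ℕ) [NeZero p] (x : Torus N) : Fin N → ZMod p :=
  fun i => ((⌊lift1 (x i) * p⌋ : ℤ) : ZMod p)

/-- The shift vector `h j ∈ 𝕋^N` for `j ∈ (ℤ/pℤ)^N`, `h = 1/p`. -/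
def hvec (N p : ℕ) [NeZero p] (j : Fin N → ZMod p) : Torus N :=
  fun i => ((((j i).val : ℝ) / p : ℝ) : AddCircle (1 : ℝ))

/-- The action of the finite-difference-type operator with cube-step coefficients:
`(A u)(x) = Σ_{j ∈ (ℤ/pℤ)^N} A_j(x) u(x + h j)`, where the step function `A_j` has the
constant value `C j r` on the cube indexed by `r`. -/
def opOf (N M p : ℕ) [NeZero p]
    (C : (Fin N → ZMod p) → (Fin N → ZMod p) → Matrix (Fin M) (Fin M) ℂ)
    (u : Torus N → EuclideanSpace ℂ (Fin M)) : Torus N → EuclideanSpace ℂ (Fin M) :=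
  fun x => ∑ j : Fin N → ZMod p,
    Matrix.toEuclideanCLM (𝕜 := ℂ) (C j (cubeIdx N p x)) (u (x + hvec N p j))

/-- The block matrix `B_A = (A_{j−r}(y + h r))_{r,j} ∈ ℂ^{Mp^N × Mp^N}` associated with the
coefficients `C` (the value `A_{j-r}(y + h r)` being the constant value of `A_{j-r}` on the
cube indexed by `r`). -/
def Bmat (N M p : ℕ) [NeZero p]
    (C : (Fin N → ZMod p) → (Fin N → ZMod p) → Matrix (Fin M) (Fin M) ℂ) :
    Matrix ((Fin N → ZMod p) × Fin M) ((Fin N → ZMod p) × Fin M) ℂ :=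
  fun rq jq => C (jq.1 - rq.1) rq.1 rq.2 jq.2


lemma coe_lift1 (x : AddCircle (1:ℝ)) : ((lift1 x : ℝ) : AddCircle (1:ℝ)) = x :=
  (AddCircle.equivIco 1 0).symm_apply_apply x

lemma coe_eq_coe_int (a b : ℝ) (h : (a : AddCircle (1:ℝ)) = (b : AddCircle (1:ℝ))) :
    ∃ k : ℤ, a = b + k := by
  rw [QuotientAddGroup.eq_iff_sub_mem] at h
  obtain ⟨k, hk⟩ := AddSubgroup.mem_zmultiples_iff.mp h
  rw [zsmul_eq_mul, mul_one] at hk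
  exact ⟨k, by linarith⟩

lemma coe_eq_coe_of_int (a b : ℝ) (k : ℤ) (h : a = b + k) :
    (a : AddCircle (1:ℝ)) = (b : AddCircle (1:ℝ)) := by
  rw [QuotientAddGroup.eq_iff_sub_mem, AddSubgroup.mem_zmultiples_iff]
  exact ⟨k, by rw [zsmul_eq_mul, mul_one, h]; ring⟩

lemma exists_int_lift1 (a : AddCircle (1:ℝ)) (c : ℝ) :
    ∃ k : ℤ, lift1 (a + (c : AddCircle (1:ℝ))) = lift1 a + c + k := by
  have h : ((lift1 (a + (c:AddCircle (1:ℝ))) : ℝ) : AddCircle (1:ℝ))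
      = ((lift1 a + c : ℝ) : AddCircle (1:ℝ)) := by
    rw [coe_lift1, QuotientAddGroup.mk_add, coe_lift1]
  exact coe_eq_coe_int _ _ h

lemma cube1 (p : ℕ) [NeZero p] (a : AddCircle (1:ℝ)) (c : ZMod p) :
    ((⌊lift1 (a + ((((c.val : ℝ) / p : ℝ)) : AddCircle (1:ℝ))) * p⌋ : ℤ) : ZMod p)
      = ((⌊lift1 a * p⌋ : ℤ) : ZMod p) + c := by
  have hp : (p : ℝ) ≠ 0 := Nat.cast_ne_zero.mpr (NeZero.ne p)
  obtain ⟨k, hk⟩ := exists_int_lift1 a ((c.val : ℝ)/p)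
  have h2 : lift1 (a + ((((c.val : ℝ) / p : ℝ)) : AddCircle (1:ℝ))) * p
      = lift1 a * p + ((c.val + k * p : ℤ) : ℝ) := by
    rw [hk]; push_cast; field_simp; ring
  rw [h2, Int.floor_add_intCast]
  push_cast
  simp [ZMod.natCast_self, ZMod.natCast_val, ZMod.cast_id]

lemma hvec_add (N p : ℕ) [NeZero p] (a b : Fin N → ZMod p) :
    hvec N p (a + b) = hvec N p a + hvec N p b := by
  funext i
  have hp : (p : ℝ) ≠ 0 := Nat.cast_ne_zero.mpr (NeZero.ne p)
  show ((((a i + b i).val : ℝ) / p : ℝ) : AddCircle (1:ℝ)) = _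
  rw [Pi.add_apply]
  show _ = ((((a i).val : ℝ) / p : ℝ) : AddCircle (1:ℝ)) + ((((b i).val : ℝ) / p : ℝ) : AddCircle (1:ℝ))
  rw [← QuotientAddGroup.mk_add, ZMod.val_add]
  apply coe_eq_coe_of_int _ _ (-(((a i).val + (b i).val) / p : ℕ) : ℤ)
  set s : ℕ := (a i).val + (b i).val with hs
  have h1 : (s % p : ℕ) + p * (s / p : ℕ) = s := Nat.mod_add_div s p
  have h2 : ((s % p : ℕ) : ℝ) = (s : ℝ) - (p : ℝ) * ((s / p : ℕ) : ℝ) := by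
    have := congrArg (fun n : ℕ => (n : ℝ)) h1
    push_cast at this
    linarith
  have h3 : (s : ℝ) = ((a i).val : ℝ) + ((b i).val : ℝ) := by rw [hs]; exact Nat.cast_add _ _
  rw [h2, h3, Int.cast_neg, Int.cast_natCast]
  field_simp
  ring

variable (N M p : ℕ) [NeZero p]

lemma cubeIdx_add_hvec (x : Torus N) (j : Fin N → ZMod p) :
    cubeIdx N p (x + hvec N p j) = cubeIdx N p x + j := by
  funext i
  exact cube1 p (x i) (j i)

variable (C : (Fin N → ZMod p) → (Fin N → ZMod p) → Matrix (Fin M) (Fin M) ℂ)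

lemma key (u : Torus N → EuclideanSpace ℂ (Fin M)) (x : Torus N) (r : Fin N → ZMod p) (q : Fin M) :
    opOf N M p C u (x + hvec N p (r - cubeIdx N p x)) q
      = ∑ jq : (Fin N → ZMod p) × Fin M,
          Bmat N M p C (r, q) jq * u (x + hvec N p (jq.1 - cubeIdx N p x)) jq.2 := by
  set r₀ := cubeIdx N p x with hr₀
  have hc : cubeIdx N p (x + hvec N p (r - r₀)) = r := by
    rw [cubeIdx_add_hvec, ← hr₀]; abel
  rw [opOf, WithLp.ofLp_sum, Finset.sum_apply, hc]
  rw [Fintype.sum_prod_type]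
  refine Fintype.sum_equiv (Equiv.addRight r) _ _ fun j => ?_
  have harg : x + hvec N p (r - r₀) + hvec N p j = x + hvec N p ((Equiv.addRight r) j - r₀) := by
    rw [add_assoc, ← hvec_add]
    congr 2
    simp [Equiv.addRight]
    abel
  rw [show (Matrix.toEuclideanCLM (𝕜 := ℂ) (C j r) (u (x + hvec N p (r - r₀) + hvec N p j))) q
      = ∑ q' : Fin M, C j r q q' * u (x + hvec N p (r - r₀) + hvec N p j) q' from rfl]
  rw [harg]
  refine Finset.sum_congr rfl fun q' _ => ?_
  congr 2
  simp [Bmat, Equiv.addRight]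

lemma norm_sq_eq_sum (n : Type*) [Fintype n] (y : EuclideanSpace ℂ n) :
    ‖y‖ ^ 2 = ∑ i, ‖y i‖ ^ 2 := by
  rw [EuclideanSpace.norm_eq, Real.sq_sqrt (by positivity)]

def pack (g : Torus N → EuclideanSpace ℂ (Fin M)) (x : Torus N) :
    EuclideanSpace ℂ ((Fin N → ZMod p) × Fin M) :=
  WithLp.toLp 2 (fun rq : (Fin N → ZMod p) × Fin M => g (x + hvec N p (rq.1 - cubeIdx N p x)) rq.2)

lemma norm_pack (g : Torus N → EuclideanSpace ℂ (Fin M)) (x : Torus N) :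
    ‖pack N M p g x‖ ^ 2 = ∑ s : Fin N → ZMod p, ‖g (x + hvec N p s)‖ ^ 2 := by
  rw [norm_sq_eq_sum, Fintype.sum_prod_type]
  calc ∑ r : Fin N → ZMod p, ∑ q : Fin M, ‖pack N M p g x (r, q)‖ ^ 2
      = ∑ r : Fin N → ZMod p, ‖g (x + hvec N p (r - cubeIdx N p x))‖ ^ 2 := by
        refine Finset.sum_congr rfl fun r _ => ?_
        exact (norm_sq_eq_sum (Fin M) (g (x + hvec N p (r - cubeIdx N p x)))).symm
    _ = _ := Fintype.sum_equiv (Equiv.subRight (cubeIdx N p x)) _ _ fun r => rfl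

lemma W_eq_BV (u : Torus N → EuclideanSpace ℂ (Fin M)) (x : Torus N) :
    pack N M p (opOf N M p C u) x
      = Matrix.toEuclideanCLM (𝕜 := ℂ) (Bmat N M p C) (pack N M p u x) := by
  ext rq
  rw [show (Matrix.toEuclideanCLM (𝕜 := ℂ) (Bmat N M p C) (pack N M p u x)) rq
      = ∑ jq, Bmat N M p C rq jq * pack N M p u x jq from rfl]
  exact key N M p C u x rq.1 rq.2

lemma pointwise_le (u : Torus N → EuclideanSpace ℂ (Fin M)) (x : Torus N) :
    ∑ s : Fin N → ZMod p, ‖opOf N M p C u (x + hvec N p s)‖ ^ 2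
      ≤ ‖Matrix.toEuclideanCLM (𝕜 := ℂ) (Bmat N M p C)‖ ^ 2
        * ∑ s : Fin N → ZMod p, ‖u (x + hvec N p s)‖ ^ 2 := by
  rw [← norm_pack N M p, ← norm_pack N M p, W_eq_BV]
  set V := pack N M p u x
  set B := Matrix.toEuclideanCLM (𝕜 := ℂ) (Bmat N M p C) with hB
  calc ‖B V‖ ^ 2 ≤ (‖B‖ * ‖V‖) ^ 2 := by
        apply pow_le_pow_left₀ (norm_nonneg _) (B.le_opNorm V)
    _ = ‖B‖ ^ 2 * ‖V‖ ^ 2 := by ring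

def stepv (v : EuclideanSpace ℂ ((Fin N → ZMod p) × Fin M)) :
    Torus N → EuclideanSpace ℂ (Fin M) :=
  fun x => WithLp.toLp 2 (fun q => v (cubeIdx N p x, q))

lemma pack_stepv (v : EuclideanSpace ℂ ((Fin N → ZMod p) × Fin M)) (x : Torus N) :
    pack N M p (stepv N M p v) x = v := by
  refine PiLp.ext (p := 2) fun jq => ?_
  show v (cubeIdx N p (x + hvec N p (jq.1 - cubeIdx N p x)), jq.2) = v jq
  rw [cubeIdx_add_hvec]
  refine congrArg (fun a => v (a, jq.2)) ?_
  rw [show cubeIdx N p x + (jq.1 - cubeIdx N p x) = jq.1 from by abel]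

lemma opOf_stepv_translate (v : EuclideanSpace ℂ ((Fin N → ZMod p) × Fin M))
    (s : Fin N → ZMod p) (x : Torus N) :
    opOf N M p C (stepv N M p v) (x + hvec N p s)
      = WithLp.toLp 2 (fun q => Matrix.toEuclideanCLM (𝕜 := ℂ) (Bmat N M p C) v (cubeIdx N p x + s, q)) := by
  ext q
  have h1 : x + hvec N p s = x + hvec N p ((cubeIdx N p x + s) - cubeIdx N p x) := by
    rw [show cubeIdx N p x + s - cubeIdx N p x = s from by abel]
  rw [h1]
  have := congrArg (fun w : EuclideanSpace ℂ ((Fin N → ZMod p) × Fin M) => w ((cubeIdx N p x + s), q)) (W_eq_BV N M p C (stepv N M p v) x)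
  simp only [pack_stepv] at this
  exact this

lemma stepv_translate (v : EuclideanSpace ℂ ((Fin N → ZMod p) × Fin M))
    (s : Fin N → ZMod p) (x : Torus N) :
    stepv N M p v (x + hvec N p s) = WithLp.toLp 2 (fun q => v (cubeIdx N p x + s, q)) := by
  ext q
  show v (cubeIdx N p (x + hvec N p s), q) = _
  rw [cubeIdx_add_hvec]

lemma sum_sq_opOf_stepv (v : EuclideanSpace ℂ ((Fin N → ZMod p) × Fin M)) (x : Torus N) :
    ∑ s : Fin N → ZMod p, ‖opOf N M p C (stepv N M p v) (x + hvec N p s)‖ ^ 2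
      = ‖Matrix.toEuclideanCLM (𝕜 := ℂ) (Bmat N M p C) v‖ ^ 2 := by
  rw [← norm_pack N M p, W_eq_BV, pack_stepv]

lemma sum_sq_stepv (v : EuclideanSpace ℂ ((Fin N → ZMod p) × Fin M)) (x : Torus N) :
    ∑ s : Fin N → ZMod p, ‖stepv N M p v (x + hvec N p s)‖ ^ 2 = ‖v‖ ^ 2 := by
  rw [← norm_pack N M p, pack_stepv]

-- measurability
lemma measurable_cubeIdx_comp (g : (Fin N → ZMod p) → EuclideanSpace ℂ (Fin M)) :
    StronglyMeasurable (fun x : Torus N => g (cubeIdx N p x)) := by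
  have hcube : ∀ r : Fin N → ZMod p, MeasurableSet {x : Torus N | cubeIdx N p x = r} := by
    intro r
    have : {x : Torus N | cubeIdx N p x = r}
        = ⋂ i : Fin N, (fun x : Torus N => (⌊lift1 (x i) * p⌋ : ℤ)) ⁻¹' {z : ℤ | ((z : ZMod p) = r i)} := by
      ext x
      simp [cubeIdx, funext_iff, Set.mem_iInter]
    rw [this]
    refine MeasurableSet.iInter fun i => ?_
    refine Measurable.floor ?_ ((Set.to_countable _).measurableSet)
    exact ((measurable_subtype_coe.comp (AddCircle.measurableEquivIco 1 0).measurable).comp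
      (measurable_pi_apply i)).mul_const _
  have heq : (fun x : Torus N => g (cubeIdx N p x))
      = fun x => ∑ r : Fin N → ZMod p, Set.indicator {y : Torus N | cubeIdx N p y = r} (fun _ => g r) x := by
    funext x
    rw [Finset.sum_eq_single (cubeIdx N p x)]
    · rw [Set.indicator_of_mem (by simp : x ∈ {y : Torus N | cubeIdx N p y = cubeIdx N p x})]
    · intro b _ hb
      exact Set.indicator_of_notMem (by simpa using fun h => hb h.symm) _
    · intro h; exact absurd (Finset.mem_univ _) h
  rw [heq]
  exact Finset.stronglyMeasurable_fun_sum _ fun r _ =>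
    (stronglyMeasurable_const).indicator (hcube r)

open ENNReal in
instance : IsProbabilityMeasure (volume : Measure (AddCircle (1:ℝ))) := ⟨by simp⟩

lemma lint_translate (f : Torus N → ℝ≥0∞) (c : Torus N) :
    ∫⁻ x, f (x + c) = ∫⁻ x, f x := by
  calc ∫⁻ x, f (x + c) ∂volume = ∫⁻ x, f x ∂(Measure.map (MeasurableEquiv.addRight c) volume) :=
        (lintegral_map_equiv f (MeasurableEquiv.addRight c)).symm
    _ = ∫⁻ x, f x ∂volume := by
        rw [show Measure.map (⇑(MeasurableEquiv.addRight c)) volume = volume from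
          (measurePreserving_add_right volume c).map_eq]

lemma ae_translate {E' : Type*} {f g : Torus N → E'} (h : f =ᵐ[volume] g) (c : Torus N) :
    (fun x => f (x + c)) =ᵐ[volume] (fun x => g (x + c)) :=
  (measurePreserving_add_right volume c).quasiMeasurePreserving.ae_eq_comp h

lemma opOf_congr {u w : Torus N → EuclideanSpace ℂ (Fin M)} (h : u =ᵐ[volume] w) :
    opOf N M p C u =ᵐ[volume] opOf N M p C w := by
  have h2 : ∀ j : Fin N → ZMod p,
      (fun x : Torus N => u (x + hvec N p j)) =ᵐ[volume] fun x => w (x + hvec N p j) :=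
    fun j => ae_translate N h _
  filter_upwards [ae_all_iff.2 h2] with x hx
  exact Finset.sum_congr rfl fun j _ => by rw [hx j]

def Q (f : Torus N → EuclideanSpace ℂ (Fin M)) : ℝ≥0∞ :=
  ∫⁻ x, (‖f x‖₊ : ℝ≥0∞) ^ 2

lemma Q_congr {f g : Torus N → EuclideanSpace ℂ (Fin M)} (h : f =ᵐ[volume] g) :
    Q N M f = Q N M g := by
  refine lintegral_congr_ae ?_
  filter_upwards [h] with x hx
  rw [hx]

lemma eLpNorm_eq_Q (f : Torus N → EuclideanSpace ℂ (Fin M)) :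
    eLpNorm f 2 volume = (Q N M f) ^ (1/2 : ℝ) := by
  rw [eLpNorm_eq_lintegral_rpow_enorm_toReal two_ne_zero ENNReal.ofNat_ne_top]
  simp only [enorm_eq_nnnorm]
  have h2 : ∀ x : Torus N, (‖f x‖₊ : ℝ≥0∞) ^ ((2:ℝ≥0∞).toReal) = (‖f x‖₊ : ℝ≥0∞) ^ (2:ℕ) := by
    intro x
    rw [ENNReal.toReal_ofNat, ← ENNReal.rpow_natCast]
    norm_num
  simp only [h2, ENNReal.toReal_ofNat]
  unfold Q
  norm_num

lemma card_mul_Q (f : Torus N → EuclideanSpace ℂ (Fin M))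
    (hf : ∀ s : Fin N → ZMod p,
      AEMeasurable (fun x : Torus N => (‖f (x + hvec N p s)‖₊ : ℝ≥0∞) ^ 2) volume) :
    (Fintype.card (Fin N → ZMod p) : ℝ≥0∞) * Q N M f
      = ∫⁻ x, ∑ s : Fin N → ZMod p, (‖f (x + hvec N p s)‖₊ : ℝ≥0∞) ^ 2 := by
  rw [lintegral_finset_sum' _ fun s _ => hf s]
  have : ∀ s : Fin N → ZMod p,
      ∫⁻ x, (‖f (x + hvec N p s)‖₊ : ℝ≥0∞) ^ 2 = Q N M f := fun s =>
    lint_translate N (fun y => (‖f y‖₊ : ℝ≥0∞) ^ 2) (hvec N p s)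
  simp only [this, Finset.sum_const, Finset.card_univ, nsmul_eq_mul]

lemma coe_nnnorm_sq_sum (a : (Fin N → ZMod p) → EuclideanSpace ℂ (Fin M)) :
    ∑ s : Fin N → ZMod p, (‖a s‖₊ : ℝ≥0∞) ^ 2
      = ENNReal.ofReal (∑ s : Fin N → ZMod p, ‖a s‖ ^ 2) := by
  rw [ENNReal.ofReal_sum_of_nonneg (fun _ _ => by positivity)]
  refine Finset.sum_congr rfl fun s _ => ?_
  rw [← enorm_eq_nnnorm, ← ofReal_norm, ← ENNReal.ofReal_pow (norm_nonneg _)]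

lemma enn_norm_sq (c : ℝ) (hc : 0 ≤ c) : ENNReal.ofReal (c ^ 2) = (ENNReal.ofReal c) ^ 2 :=
  ENNReal.ofReal_pow hc 2

lemma norm_sq_Q (f : Lp (EuclideanSpace ℂ (Fin M)) 2 (volume : Measure (Torus N))) : ‖f‖ ^ 2 = (Q N M ⇑f).toReal := by
  rw [Lp.norm_def, eLpNorm_eq_Q, ← ENNReal.toReal_rpow]
  rw [← Real.rpow_natCast ((Q N M ⇑f).toReal ^ (1/2:ℝ)) 2, ← Real.rpow_mul ENNReal.toReal_nonneg]
  norm_num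

lemma card_ne_zero' : ((Fintype.card (Fin N → ZMod p) : ℝ≥0∞)) ≠ 0 :=
  Nat.cast_ne_zero.mpr Fintype.card_ne_zero

lemma upper_bound (T : Lp (EuclideanSpace ℂ (Fin M)) 2 (volume : Measure (Torus N)) →L[ℂ]
      Lp (EuclideanSpace ℂ (Fin M)) 2 (volume : Measure (Torus N)))
    (hT : ∀ u, (T u : Torus N → EuclideanSpace ℂ (Fin M)) =ᵐ[volume] opOf N M p C u) :
    ‖T‖ ≤ ‖Matrix.toEuclideanCLM (𝕜 := ℂ) (Bmat N M p C)‖ := by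
  set B := Matrix.toEuclideanCLM (𝕜 := ℂ) (Bmat N M p C) with hBdef
  refine T.opNorm_le_bound (norm_nonneg _) fun u => ?_
  have hTu : ⇑(T u) =ᵐ[volume] opOf N M p C ⇑u := hT u
  have hgm : ∀ s : Fin N → ZMod p,
      AEMeasurable (fun x : Torus N => (‖(T u : Torus N → EuclideanSpace ℂ (Fin M)) (x + hvec N p s)‖₊ : ℝ≥0∞) ^ 2) volume :=
    fun s => (((Lp.aestronglyMeasurable (T u)).comp_quasiMeasurePreserving
      (measurePreserving_add_right volume (hvec N p s)).quasiMeasurePreserving).enorm).pow_const 2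
  have hum : ∀ s : Fin N → ZMod p,
      AEMeasurable (fun x : Torus N => (‖(u : Torus N → EuclideanSpace ℂ (Fin M)) (x + hvec N p s)‖₊ : ℝ≥0∞) ^ 2) volume :=
    fun s => (((Lp.aestronglyMeasurable u).comp_quasiMeasurePreserving
      (measurePreserving_add_right volume (hvec N p s)).quasiMeasurePreserving).enorm).pow_const 2
  have key2 : ∫⁻ x, ∑ s : Fin N → ZMod p, (‖(T u : Torus N → EuclideanSpace ℂ (Fin M)) (x + hvec N p s)‖₊ : ℝ≥0∞) ^ 2
      = ∫⁻ x, ∑ s : Fin N → ZMod p, (‖opOf N M p C ⇑u (x + hvec N p s)‖₊ : ℝ≥0∞) ^ 2 := by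
    refine lintegral_congr_ae ?_
    filter_upwards [ae_all_iff.2 fun s => ae_translate N hTu (hvec N p s)] with x hx
    exact Finset.sum_congr rfl fun s _ => by rw [hx s]
  have key3 : ∀ x : Torus N,
      ∑ s : Fin N → ZMod p, (‖opOf N M p C ⇑u (x + hvec N p s)‖₊ : ℝ≥0∞) ^ 2
        ≤ (‖B‖₊ : ℝ≥0∞) ^ 2 * ∑ s : Fin N → ZMod p, (‖(u : Torus N → EuclideanSpace ℂ (Fin M)) (x + hvec N p s)‖₊ : ℝ≥0∞) ^ 2 := by
    intro x
    rw [coe_nnnorm_sq_sum, coe_nnnorm_sq_sum,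
      show ((‖B‖₊ : ℝ≥0∞)) = ENNReal.ofReal ‖B‖ from (ofReal_norm B).symm,
      ← enn_norm_sq _ (norm_nonneg B), ← ENNReal.ofReal_mul (by positivity)]
    exact ENNReal.ofReal_le_ofReal (pointwise_le N M p C ⇑u x)
  have hchain : (Fintype.card (Fin N → ZMod p) : ℝ≥0∞) * Q N M ⇑(T u)
      ≤ (Fintype.card (Fin N → ZMod p) : ℝ≥0∞) * ((‖B‖₊ : ℝ≥0∞) ^ 2 * Q N M ⇑u) := by
    rw [card_mul_Q N M p _ hgm, key2]
    calc ∫⁻ x, ∑ s : Fin N → ZMod p, (‖opOf N M p C ⇑u (x + hvec N p s)‖₊ : ℝ≥0∞) ^ 2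
        ≤ ∫⁻ x, (‖B‖₊ : ℝ≥0∞) ^ 2 * ∑ s : Fin N → ZMod p, (‖(u : Torus N → EuclideanSpace ℂ (Fin M)) (x + hvec N p s)‖₊ : ℝ≥0∞) ^ 2 :=
          lintegral_mono key3
      _ = (‖B‖₊ : ℝ≥0∞) ^ 2 * ∫⁻ x, ∑ s : Fin N → ZMod p, (‖(u : Torus N → EuclideanSpace ℂ (Fin M)) (x + hvec N p s)‖₊ : ℝ≥0∞) ^ 2 :=
          lintegral_const_mul' _ _ (ENNReal.pow_ne_top ENNReal.coe_ne_top)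
      _ = _ := by rw [← card_mul_Q N M p _ hum]; ring
  have hQle : Q N M ⇑(T u) ≤ (‖B‖₊ : ℝ≥0∞) ^ 2 * Q N M ⇑u :=
    (ENNReal.mul_le_mul_iff_right (card_ne_zero' N p) (ENNReal.natCast_ne_top _)).mp hchain
  have h5 : eLpNorm (⇑(T u)) 2 volume ≤ (‖B‖₊ : ℝ≥0∞) * eLpNorm (⇑u) 2 volume := by
    rw [eLpNorm_eq_Q, eLpNorm_eq_Q]
    calc (Q N M ⇑(T u)) ^ (1/2:ℝ) ≤ ((‖B‖₊ : ℝ≥0∞) ^ 2 * Q N M ⇑u) ^ (1/2:ℝ) :=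
          ENNReal.rpow_le_rpow hQle (by norm_num)
      _ = (‖B‖₊ : ℝ≥0∞) * (Q N M ⇑u) ^ (1/2:ℝ) := by
          rw [ENNReal.mul_rpow_of_nonneg _ _ (by norm_num : (0:ℝ) ≤ 1/2)]
          congr 1
          rw [← ENNReal.rpow_natCast (‖B‖₊ : ℝ≥0∞) 2, ← ENNReal.rpow_mul]
          norm_num
  rw [Lp.norm_def, Lp.norm_def]
  calc (eLpNorm (⇑(T u)) 2 volume).toReal
      ≤ ((‖B‖₊ : ℝ≥0∞) * eLpNorm (⇑u) 2 volume).toReal := by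
        refine ENNReal.toReal_mono ?_ h5
        exact ENNReal.mul_ne_top ENNReal.coe_ne_top (Lp.eLpNorm_lt_top u).ne
    _ = ‖B‖ * (eLpNorm (⇑u) 2 volume).toReal := by
        rw [ENNReal.toReal_mul, ENNReal.coe_toReal, coe_nnnorm]

lemma lower_bound (T : Lp (EuclideanSpace ℂ (Fin M)) 2 (volume : Measure (Torus N)) →L[ℂ]
      Lp (EuclideanSpace ℂ (Fin M)) 2 (volume : Measure (Torus N)))
    (hT : ∀ u, (T u : Torus N → EuclideanSpace ℂ (Fin M)) =ᵐ[volume] opOf N M p C u) :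
    ‖Matrix.toEuclideanCLM (𝕜 := ℂ) (Bmat N M p C)‖ ≤ ‖T‖ := by
  set B := Matrix.toEuclideanCLM (𝕜 := ℂ) (Bmat N M p C) with hBdef
  refine B.opNorm_le_bound (norm_nonneg _) fun v => ?_
  set φ := stepv N M p v with hφdef
  have hφm : AEStronglyMeasurable φ volume :=
    (measurable_cubeIdx_comp N M p (fun r => WithLp.toLp 2 (fun q => v (r, q)))).aestronglyMeasurable
  set G : (Fin N → ZMod p) → EuclideanSpace ℂ (Fin M) := fun r => WithLp.toLp 2 (fun q => v (r, q)) with hG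
  have hφbd : ∀ᵐ x ∂(volume : Measure (Torus N)),
      ‖φ x‖ ≤ ∑ r : Fin N → ZMod p, ‖G r‖ := by
    refine Filter.Eventually.of_forall fun x => ?_
    exact Finset.single_le_sum (f := fun r => ‖G r‖)
      (fun r _ => norm_nonneg _) (Finset.mem_univ (cubeIdx N p x))
  have hmem : MemLp φ 2 volume := MemLp.of_bound hφm _ hφbd
  set uv := hmem.toLp φ with huvdef
  have hcoe : ⇑uv =ᵐ[volume] φ := hmem.coeFn_toLp
  -- measurability of the translated pieces
  have hφtrans : ∀ s : Fin N → ZMod p, (fun x : Torus N => φ (x + hvec N p s))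
      = fun x => WithLp.toLp 2 (fun q => v (cubeIdx N p x + s, q)) := by
    intro s; funext x; exact stepv_translate N M p v s x
  have hoptrans : ∀ s : Fin N → ZMod p, (fun x : Torus N => opOf N M p C φ (x + hvec N p s))
      = fun x => WithLp.toLp 2 (fun q => B v (cubeIdx N p x + s, q)) := by
    intro s; funext x; exact opOf_stepv_translate N M p C v s x
  have hms : ∀ s : Fin N → ZMod p,
      AEMeasurable (fun x : Torus N => (‖opOf N M p C φ (x + hvec N p s)‖₊ : ℝ≥0∞) ^ 2) volume := by
    intro s
    have : StronglyMeasurable (fun x : Torus N => opOf N M p C φ (x + hvec N p s)) := by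
      rw [hoptrans s]
      exact measurable_cubeIdx_comp N M p (fun r => WithLp.toLp 2 (fun q => B v (r + s, q)))
    exact (this.aestronglyMeasurable.enorm).pow_const 2
  have hmu : ∀ s : Fin N → ZMod p,
      AEMeasurable (fun x : Torus N => (‖φ (x + hvec N p s)‖₊ : ℝ≥0∞) ^ 2) volume := by
    intro s
    have : StronglyMeasurable (fun x : Torus N => φ (x + hvec N p s)) := by
      rw [hφtrans s]
      exact measurable_cubeIdx_comp N M p (fun r => WithLp.toLp 2 (fun q => v (r + s, q)))
    exact (this.aestronglyMeasurable.enorm).pow_const 2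
  -- exact computations
  have e1 : (Fintype.card (Fin N → ZMod p) : ℝ≥0∞) * Q N M (opOf N M p C φ)
      = ENNReal.ofReal (‖B v‖ ^ 2) := by
    rw [card_mul_Q N M p _ hms]
    have : ∀ x : Torus N, ∑ s : Fin N → ZMod p, (‖opOf N M p C φ (x + hvec N p s)‖₊ : ℝ≥0∞) ^ 2
        = ENNReal.ofReal (‖B v‖ ^ 2) := by
      intro x
      rw [coe_nnnorm_sq_sum, sum_sq_opOf_stepv N M p C v x]
    simp only [this]
    rw [lintegral_const]
    simp
  have e2 : (Fintype.card (Fin N → ZMod p) : ℝ≥0∞) * Q N M φ = ENNReal.ofReal (‖v‖ ^ 2) := by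
    rw [card_mul_Q N M p _ hmu]
    have : ∀ x : Torus N, ∑ s : Fin N → ZMod p, (‖φ (x + hvec N p s)‖₊ : ℝ≥0∞) ^ 2
        = ENNReal.ofReal (‖v‖ ^ 2) := by
      intro x
      rw [coe_nnnorm_sq_sum, sum_sq_stepv N M p v x]
    simp only [this]
    rw [lintegral_const]
    simp
  have hQT : Q N M ⇑(T uv) = Q N M (opOf N M p C φ) :=
    Q_congr N M ((hT uv).trans (opOf_congr N M p C hcoe))
  have hQu : Q N M ⇑uv = Q N M φ := Q_congr N M hcoe
  -- real versions
  set cR : ℝ := (Fintype.card (Fin N → ZMod p) : ℝ) with hcR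
  have hr1 : ‖B v‖ ^ 2 = cR * ‖T uv‖ ^ 2 := by
    rw [norm_sq_Q N M (T uv), hQT]
    have := congrArg ENNReal.toReal e1
    rw [ENNReal.toReal_mul, ENNReal.toReal_natCast, ENNReal.toReal_ofReal (by positivity)] at this
    linarith [this]
  have hr2 : ‖v‖ ^ 2 = cR * ‖uv‖ ^ 2 := by
    rw [norm_sq_Q N M uv, hQu]
    have := congrArg ENNReal.toReal e2
    rw [ENNReal.toReal_mul, ENNReal.toReal_natCast, ENNReal.toReal_ofReal (by positivity)] at this
    linarith [this]
  have hcRnn : 0 ≤ cR := by positivity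
  have hstep : ‖B v‖ ^ 2 ≤ (‖T‖ * ‖v‖) ^ 2 := by
    have hle : ‖T uv‖ ≤ ‖T‖ * ‖uv‖ := T.le_opNorm uv
    have hsq : ‖T uv‖ ^ 2 ≤ (‖T‖ * ‖uv‖) ^ 2 :=
      pow_le_pow_left₀ (norm_nonneg _) hle 2
    calc ‖B v‖ ^ 2 = cR * ‖T uv‖ ^ 2 := hr1
      _ ≤ cR * (‖T‖ * ‖uv‖) ^ 2 := by nlinarith [hsq, hcRnn]
      _ = ‖T‖ ^ 2 * (cR * ‖uv‖ ^ 2) := by ring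
      _ = ‖T‖ ^ 2 * ‖v‖ ^ 2 := by rw [← hr2]
      _ = (‖T‖ * ‖v‖) ^ 2 := by ring
  exact le_of_sq_le_sq hstep (by positivity)

/-- Fix `p ≥ 1`, `h = 1/p`.  Every operator `A ∈ H^h`, i.e.
`(A u)(x) = Σ_j A_j(x) u(x + h j)` with cube-step coefficients `C`, has operator norm on
`L²(𝕋^N → ℂ^M)` equal to the operator norm of the matrix `B_A ∈ ℂ^{Mp^N × Mp^N}`. -/
theorem stmt8 (N M p : ℕ) [NeZero p]
    (C : (Fin N → ZMod p) → (Fin N → ZMod p) → Matrix (Fin M) (Fin M) ℂ)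
    (T : L2 N M →L[ℂ] L2 N M)
    (hT : ∀ u : L2 N M,
      (T u : Torus N → EuclideanSpace ℂ (Fin M)) =ᵐ[volume] opOf N M p C u) :
    ‖T‖ = ‖Matrix.toEuclideanCLM (𝕜 := ℂ) (Bmat N M p C)‖ :=
  le_antisymm (upper_bound N M p C T hT) (lower_bound N M p C T hT)
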